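/- arXiv:2009.08707 — 2 statements merged into one kernel-verified Lean document; each statement's English description precedes it below -/
import Mathlib

section
/- In the compatible lexicographic product Σ₁[Σ₂] with Σ₂ all-positive or all-negative, for u_i = u_j and non-adjacent v_k ≠ v_l, the signed distance between (u_i,v_k) and (u_i,v_l) equals +2, provided u_i has a neighbor in Σ₁ or v_k and v_l have a common neighbor in Σ₂. -/
open SimpleGraph

/-- The sign of a walk: the product of the signs of its edges. -/
def walkSign {V : Type*} {G : SimpleGraph V} (σ : V → V → ℤ) :
    {u v : V} → G.Walk u v → ℤ
  | _, _, SimpleGraph.Walk.nil => 1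
  | _, _, @SimpleGraph.Walk.cons _ _ a b _ _ p => σ a b * walkSign σ p

/-- A walk is a shortest path if its length equals the distance of its endpoints. -/
def IsShortest {V : Type*} {G : SimpleGraph V} {u v : V} (p : G.Walk u v) : Prop :=
  p.length = G.dist u v

/-- A signed graph is compatible if all shortest paths between any two vertices have
the same sign. -/
def Compatible {V : Type*} (G : SimpleGraph V) (σ : V → V → ℤ) : Prop :=
  ∀ (u v : V) (p q : G.Walk u v), IsShortest p → IsShortest q →
    walkSign σ p = walkSign σ q

/-- The lexicographic product of two graphs: `(a,b) ~ (c,d)` iff `a ~ c`,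
or `a = c` and `b ~ d`. -/
def lexProd {V₁ V₂ : Type*} (G₁ : SimpleGraph V₁) (G₂ : SimpleGraph V₂) :
    SimpleGraph (V₁ × V₂) where
  Adj x y := G₁.Adj x.1 y.1 ∨ (x.1 = y.1 ∧ G₂.Adj x.2 y.2)
  symm := by
    constructor
    rintro x y (h | ⟨h, h2⟩)
    · exact Or.inl h.symm
    · exact Or.inr ⟨h.symm, h2.symm⟩
  loopless := by
    constructor
    rintro x (h | ⟨_, h2⟩)
    · exact G₁.irrefl h
    · exact G₂.irrefl h2

/-- The signature of the lexicographic product of signed graphs. -/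
def lexSign {V₁ V₂ : Type*} [DecidableEq V₁] (σ₁ : V₁ → V₁ → ℤ) (σ₂ : V₂ → V₂ → ℤ) :
    V₁ × V₂ → V₁ × V₂ → ℤ :=
  fun x y => if x.1 = y.1 then σ₂ x.2 y.2 else σ₁ x.1 y.1

/-- In the compatible lexicographic product `Σ₁[Σ₂]` with `Σ₂` all-positive or
all-negative, for `u_i = u_j` and non-adjacent `v_k ≠ v_l`, the signed distance between
`(u_i,v_k)` and `(u_i,v_l)` equals `+2` (distance `2` and every shortest path positive),
provided `u_i` has a neighbour in `Σ₁` or `v_k` and `v_l` have a common neighbour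
in `Σ₂`. -/
theorem lexProd_fiber_distance {V₁ V₂ : Type*} [DecidableEq V₁]
    (G₁ : SimpleGraph V₁) (G₂ : SimpleGraph V₂)
    (σ₁ : V₁ → V₁ → ℤ) (σ₂ : V₂ → V₂ → ℤ)
    (hσ₁ : ∀ u v : V₁, G₁.Adj u v → σ₁ u v = 1 ∨ σ₁ u v = -1)
    (hσ₂ : ∀ u v : V₂, G₂.Adj u v → σ₂ u v = 1 ∨ σ₂ u v = -1)
    (hsymm₁ : ∀ u v : V₁, σ₁ u v = σ₁ v u) (hsymm₂ : ∀ u v : V₂, σ₂ u v = σ₂ v u)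
    (hconst : (∀ u v : V₂, G₂.Adj u v → σ₂ u v = 1) ∨
      (∀ u v : V₂, G₂.Adj u v → σ₂ u v = -1))
    (hc : Compatible (lexProd G₁ G₂) (lexSign σ₁ σ₂))
    (uᵢ : V₁) (vₖ vₗ : V₂) (hne : vₖ ≠ vₗ) (hnadj : ¬ G₂.Adj vₖ vₗ)
    (hnbr : (∃ u : V₁, G₁.Adj uᵢ u) ∨ (∃ w : V₂, G₂.Adj vₖ w ∧ G₂.Adj w vₗ)) :
    (lexProd G₁ G₂).dist (uᵢ, vₖ) (uᵢ, vₗ) = 2 ∧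
      ∀ P : (lexProd G₁ G₂).Walk (uᵢ, vₖ) (uᵢ, vₗ), IsShortest P →
        walkSign (lexSign σ₁ σ₂) P = 1 := by
  -- Construct a length-2 walk with sign 1.
  have key : ∃ W : (lexProd G₁ G₂).Walk (uᵢ, vₖ) (uᵢ, vₗ),
      W.length = 2 ∧ walkSign (lexSign σ₁ σ₂) W = 1 := by
    rcases hnbr with ⟨u, hu⟩ | ⟨w, hw1, hw2⟩
    · have h1 : (lexProd G₁ G₂).Adj (uᵢ, vₖ) (u, vₖ) := Or.inl hu
      have h2 : (lexProd G₁ G₂).Adj (u, vₖ) (uᵢ, vₗ) := Or.inl hu.symm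
      refine ⟨Walk.cons h1 (Walk.cons h2 Walk.nil), rfl, ?_⟩
      have hne1 : uᵢ ≠ u := hu.ne
      simp only [walkSign, lexSign, if_neg hne1, if_neg (Ne.symm hne1), mul_one]
      rw [hsymm₁ u uᵢ]
      rcases hσ₁ uᵢ u hu with h | h <;> rw [h] <;> norm_num
    · have h1 : (lexProd G₁ G₂).Adj (uᵢ, vₖ) (uᵢ, w) := Or.inr ⟨rfl, hw1⟩
      have h2 : (lexProd G₁ G₂).Adj (uᵢ, w) (uᵢ, vₗ) := Or.inr ⟨rfl, hw2⟩
      refine ⟨Walk.cons h1 (Walk.cons h2 Walk.nil), rfl, ?_⟩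
      simp only [walkSign, lexSign, if_pos rfl, mul_one]
      rcases hconst with h | h
      · rw [h _ _ hw1, h _ _ hw2]; norm_num
      · rw [h _ _ hw1, h _ _ hw2]; norm_num
  obtain ⟨W, hWlen, hWsign⟩ := key
  have hnadjP : ¬ (lexProd G₁ G₂).Adj (uᵢ, vₖ) (uᵢ, vₗ) := by
    rintro (h | ⟨-, h⟩)
    · exact (G₁.irrefl h).elim
    · exact hnadj h
  have hle : (lexProd G₁ G₂).dist (uᵢ, vₖ) (uᵢ, vₗ) ≤ 2 := by
    calc (lexProd G₁ G₂).dist (uᵢ, vₖ) (uᵢ, vₗ) ≤ W.length := SimpleGraph.dist_le W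
    _ = 2 := hWlen
  have hreach : (lexProd G₁ G₂).Reachable (uᵢ, vₖ) (uᵢ, vₗ) := ⟨W⟩
  have hdist : (lexProd G₁ G₂).dist (uᵢ, vₖ) (uᵢ, vₗ) = 2 := by
    have h0 : (lexProd G₁ G₂).dist (uᵢ, vₖ) (uᵢ, vₗ) ≠ 0 := by
      rw [SimpleGraph.dist_ne_zero_iff_ne_and_reachable]
      exact ⟨by simp [Prod.ext_iff, hne], hreach⟩
    have h1 : (lexProd G₁ G₂).dist (uᵢ, vₖ) (uᵢ, vₗ) ≠ 1 := fun h =>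
      hnadjP (SimpleGraph.dist_eq_one_iff_adj.mp h)
    omega
  refine ⟨hdist, fun P hP => ?_⟩
  have hWshort : IsShortest W := by rw [IsShortest, hWlen, hdist]
  rw [hc _ _ P W hP hWshort, hWsign]
end

section
/- Let Σ₁ be a compatible signed graph on m vertices with signed distance matrix eigenvalues λ₁ ≥ … ≥ λ_m, and let Σ₂ be the single negative edge K₂⁻. Then the signed distance matrix of the lexicographic product Σ₁[Σ₂] has eigenvalues 2λ_i − 1 for 1 ≤ i ≤ m, together with +1 of multiplicity m. -/
open SimpleGraph

open Polynomial

open Kronecker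

section AuxLemmas

variable {V₁ : Type*} [DecidableEq V₁] {G₁ : SimpleGraph V₁}

omit [DecidableEq V₁] in
lemma proj_exists {x y : V₁ × Fin 2} (P : (lexProd G₁ (⊤ : SimpleGraph (Fin 2))).Walk x y) :
    ∃ q : G₁.Walk x.1 y.1, q.length ≤ P.length := by
  induction P with
  | nil => exact ⟨.nil, by simp⟩
  | @cons a b c h p ih =>
    obtain ⟨q, hq⟩ := ih
    rcases h with h | ⟨h, -⟩
    · exact ⟨.cons h q, Nat.succ_le_succ hq⟩
    · exact ⟨q.copy h.symm rfl, by simp; exact Nat.le_succ_of_le hq⟩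

lemma lift_exists (σ₁ : V₁ → V₁ → ℤ) (σ₂ : Fin 2 → Fin 2 → ℤ) {u v : V₁} (j : Fin 2)
    (p : G₁.Walk u v) :
    ∃ P : (lexProd G₁ (⊤ : SimpleGraph (Fin 2))).Walk (u, j) (v, j),
      P.length = p.length ∧ walkSign (lexSign σ₁ σ₂) P = walkSign σ₁ p := by
  induction p with
  | nil => exact ⟨.nil, by simp, rfl⟩
  | @cons a b c h p ih =>
    obtain ⟨P, hl, hs⟩ := ih
    refine ⟨.cons (Or.inl h) P, by show P.length + 1 = p.length + 1; rw [hl], ?_⟩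
    simp [walkSign, lexSign, h.ne, hs]

open Polynomial in
lemma charpoly_conj {n : Type*} [Fintype n] [DecidableEq n] {R : Type*} [CommRing R]
    (P Q A : Matrix n n R) (h1 : P * Q = 1) :
    (P * A * Q).charpoly = A.charpoly := by
  classical
  have hone : (P * Q).map (C : R →+* R[X]) = 1 := by
    rw [h1, Matrix.map_one _ (map_zero _) (map_one _)]
  have key : Matrix.charmatrix (P * A * Q) =
      P.map (C : R →+* R[X]) * Matrix.charmatrix A * Q.map (C : R →+* R[X]) := by
    rw [Matrix.charmatrix, Matrix.charmatrix]
    rw [Matrix.mul_sub, Matrix.sub_mul]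
    congr 1
    · rw [Matrix.scalar_apply, Matrix.mul_assoc, ← Matrix.smul_eq_diagonal_mul,
        Matrix.mul_smul, ← Matrix.map_mul, hone, Matrix.smul_eq_diagonal_mul, Matrix.mul_one]
    · simp only [RingHom.mapMatrix_apply]
      rw [← Matrix.map_mul, ← Matrix.map_mul]
  rw [Matrix.charpoly, key, Matrix.det_mul, Matrix.det_mul, Matrix.charpoly]
  have : (P.map (C : R →+* R[X])).det * (Q.map (C : R →+* R[X])).det = 1 := by
    rw [← Matrix.det_mul, ← Matrix.map_mul, hone, Matrix.det_one]
  rw [mul_right_comm, this, one_mul]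

end AuxLemmas

/-- The equivalence `V ⊕ V ≃ V × Fin 2`. -/
def pairEquiv (V : Type*) : V ⊕ V ≃ V × Fin 2 where
  toFun x := Sum.elim (fun u => (u, 0)) (fun u => (u, 1)) x
  invFun p := if p.2 = 0 then .inl p.1 else .inr p.1
  left_inv := by rintro (u | u) <;> simp
  right_inv := by rintro ⟨u, i⟩; fin_cases i <;> simp


/-- Signed distance spectrum of the lexicographic product `Σ₁[K₂⁻]`:
if `Σ₁` is a compatible signed graph on `m` vertices whose signed distance matrix has
eigenvalues `λ₁ ≥ … ≥ λ_m`, then `D(Σ₁[K₂⁻])` has eigenvalues `2λᵢ − 1` (for each `i`)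
together with `+1` of multiplicity `m` (stated via the characteristic polynomial). -/
theorem lexProd_K2neg_distance_spectrum {V₁ : Type*} [Fintype V₁] [DecidableEq V₁]
    {m : ℕ} (hcard : Fintype.card V₁ = m)
    (G₁ : SimpleGraph V₁) (h₁ : G₁.Connected)
    (σ₁ : V₁ → V₁ → ℤ)
    (hσ₁ : ∀ u v : V₁, G₁.Adj u v → σ₁ u v = 1 ∨ σ₁ u v = -1)
    (hsymm₁ : ∀ u v : V₁, σ₁ u v = σ₁ v u)
    -- `Σ₁` is compatible with common shortest-path signs `s₁`:
    (s₁ : V₁ → V₁ → ℤ)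
    (hs₁ : ∀ (u v : V₁) (p : G₁.Walk u v), IsShortest p → walkSign σ₁ p = s₁ u v)
    -- the eigenvalues `λ₁ ≥ … ≥ λ_m` of the signed distance matrix of `Σ₁`:
    (lam : Fin m → ℝ) (hord : ∀ i j : Fin m, i ≤ j → lam j ≤ lam i)
    (hchar : (Matrix.of fun u v : V₁ => (s₁ u v : ℝ) * (G₁.dist u v : ℝ)).charpoly =
      ∏ i : Fin m, (X - C (lam i)))
    -- `Σ₂ = K₂⁻`, a single negative edge:
    (σ₂ : Fin 2 → Fin 2 → ℤ) (hσ₂ : ∀ u v : Fin 2, σ₂ u v = -1)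
    -- the lexicographic product is compatible, with common shortest-path sign `sL`:
    (sL : V₁ × Fin 2 → V₁ × Fin 2 → ℤ)
    (hsL : ∀ (x y : V₁ × Fin 2)
      (P : (lexProd G₁ (⊤ : SimpleGraph (Fin 2))).Walk x y), IsShortest P →
        walkSign (lexSign σ₁ σ₂) P = sL x y) :
    (Matrix.of fun x y : V₁ × Fin 2 =>
        (sL x y : ℝ) * ((lexProd G₁ (⊤ : SimpleGraph (Fin 2))).dist x y : ℝ)).charpoly =
      (∏ i : Fin m, (X - C (2 * lam i - 1))) * (X - 1) ^ m := by
  classical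
  set Glex := lexProd G₁ (⊤ : SimpleGraph (Fin 2)) with hGL
  set A : Matrix V₁ V₁ ℝ := Matrix.of fun u v : V₁ => (s₁ u v : ℝ) * (G₁.dist u v : ℝ) with hA
  -- Part A: entries of the distance matrix of the product
  have hoff : ∀ (u v : V₁) (i j : Fin 2), u ≠ v →
      Glex.dist (u,i) (v,j) = G₁.dist u v ∧ sL (u,i) (v,j) = s₁ u v := by
    intro u v i j hne
    obtain ⟨p, hp⟩ := (h₁.preconnected u v).exists_walk_length_eq_dist
    cases p with
    | nil => exact absurd rfl hne
    | @cons _ b _ h p' =>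
      obtain ⟨P', hPl, hPs⟩ := lift_exists σ₁ σ₂ j p'
      have hadj : Glex.Adj (u, i) (b, j) := Or.inl h
      set P : Glex.Walk (u,i) (v,j) := SimpleGraph.Walk.cons hadj P' with hPdef
      have hlen : P.length = G₁.dist u v := by
        rw [← hp]; simp [hPdef, hPl]
      have hdle : Glex.dist (u,i) (v,j) ≤ G₁.dist u v := hlen ▸ SimpleGraph.dist_le P
      have hdge : G₁.dist u v ≤ Glex.dist (u,i) (v,j) := by
        obtain ⟨Q, hQ⟩ := P.reachable.exists_walk_length_eq_dist
        obtain ⟨q, hq⟩ := proj_exists Q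
        calc G₁.dist u v ≤ q.length := SimpleGraph.dist_le q
          _ ≤ Q.length := hq
          _ = Glex.dist (u,i) (v,j) := hQ
      have hdist : Glex.dist (u,i) (v,j) = G₁.dist u v := le_antisymm hdle hdge
      refine ⟨hdist, ?_⟩
      have hshort : IsShortest P := by rw [IsShortest, hlen, hdist]
      have hws : walkSign (lexSign σ₁ σ₂) P = walkSign σ₁ (SimpleGraph.Walk.cons h p') := by
        simp [hPdef, walkSign, lexSign, h.ne, hPs]
      rw [← hsL _ _ P hshort, hws, hs₁ _ _ _ hp]
  have hdiag : ∀ (u : V₁) (i j : Fin 2), i ≠ j →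
      Glex.dist (u,i) (u,j) = 1 ∧ sL (u,i) (u,j) = -1 := by
    intro u i j hij
    have hadj : Glex.Adj (u,i) (u,j) := Or.inr ⟨rfl, by simpa using hij⟩
    have hd : Glex.dist (u,i) (u,j) = 1 := SimpleGraph.dist_eq_one_iff_adj.mpr hadj
    refine ⟨hd, ?_⟩
    have hshort : IsShortest hadj.toWalk := by
      rw [IsShortest, hd]; rfl
    rw [← hsL _ _ hadj.toWalk hshort]
    simp [SimpleGraph.Adj.toWalk, walkSign, lexSign, hσ₂]
  -- the 2×2 ingredients
  set Jm : Matrix (Fin 2) (Fin 2) ℝ := !![1,1;1,1] with hJm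
  set Em : Matrix (Fin 2) (Fin 2) ℝ := !![0,-1;-1,0] with hEm
  set Pm : Matrix (Fin 2) (Fin 2) ℝ := !![1,1;1,-1] with hPm
  set Pim : Matrix (Fin 2) (Fin 2) ℝ := !![2⁻¹,2⁻¹;2⁻¹,-2⁻¹] with hPim
  have hPP : Pm * Pim = 1 := by
    ext i j; fin_cases i <;> fin_cases j <;>
      norm_num [hPm, hPim, Matrix.mul_apply, Fin.sum_univ_two]
  have hPP' : Pim * Pm = 1 := by
    ext i j; fin_cases i <;> fin_cases j <;>
      norm_num [hPm, hPim, Matrix.mul_apply, Fin.sum_univ_two]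
  have hJconj : Pim * Jm * Pm = !![2,0;0,0] := by
    ext i j; fin_cases i <;> fin_cases j <;>
      norm_num [hPm, hPim, hJm, Matrix.mul_apply, Fin.sum_univ_two]
  have hEconj : Pim * Em * Pm = !![-1,0;0,1] := by
    ext i j; fin_cases i <;> fin_cases j <;>
      norm_num [hPm, hPim, hEm, Matrix.mul_apply, Fin.sum_univ_two]
  -- the distance matrix as a Kronecker sum
  have hM : (Matrix.of fun x y : V₁ × Fin 2 => (sL x y : ℝ) * (Glex.dist x y : ℝ)) =
      A ⊗ₖ Jm + (1 : Matrix V₁ V₁ ℝ) ⊗ₖ Em := by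
    ext ⟨u, i⟩ ⟨v, j⟩
    by_cases huv : u = v
    · subst huv
      by_cases hij : i = j
      · subst hij
        fin_cases i <;>
          simp [hA, hJm, hEm, Matrix.kroneckerMap_apply, SimpleGraph.dist_self,
            Matrix.one_apply]
      · obtain ⟨hd, hs⟩ := hdiag u i j hij
        have hAuu : A u u = 0 := by simp [hA, SimpleGraph.dist_self]
        rw [Matrix.of_apply, hd, hs]
        fin_cases i <;> fin_cases j <;>
          first
            | exact absurd rfl hij
            | norm_num [hJm, hEm, hAuu, Matrix.kroneckerMap_apply, Matrix.one_apply]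
    · obtain ⟨hd, hs⟩ := hoff u v i j huv
      rw [Matrix.of_apply, hd, hs]
      have h1 : (1 : Matrix V₁ V₁ ℝ) u v = 0 := Matrix.one_apply_ne huv
      have hJ1 : Jm i j = 1 := by fin_cases i <;> fin_cases j <;> norm_num [hJm]
      simp [hA, Matrix.kroneckerMap_apply, h1, hJ1]
  rw [hM]
  -- conjugate by 1 ⊗ₖ Pm
  have hconj : ((1 : Matrix V₁ V₁ ℝ) ⊗ₖ Pim) * (A ⊗ₖ Jm + (1 : Matrix V₁ V₁ ℝ) ⊗ₖ Em) *
      ((1 : Matrix V₁ V₁ ℝ) ⊗ₖ Pm) =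
      A ⊗ₖ !![2,0;0,0] + (1 : Matrix V₁ V₁ ℝ) ⊗ₖ !![-1,0;0,1] := by
    rw [Matrix.mul_add, Matrix.add_mul, ← Matrix.mul_kronecker_mul, ← Matrix.mul_kronecker_mul,
      ← Matrix.mul_kronecker_mul, ← Matrix.mul_kronecker_mul]
    simp only [Matrix.one_mul, Matrix.mul_one]
    rw [hJconj, hEconj]
  have hunit : ((1 : Matrix V₁ V₁ ℝ) ⊗ₖ Pim) * ((1 : Matrix V₁ V₁ ℝ) ⊗ₖ Pm) = 1 := by
    rw [← Matrix.mul_kronecker_mul, Matrix.one_mul, hPP', Matrix.one_kronecker_one]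
  have hcc : (A ⊗ₖ Jm + (1 : Matrix V₁ V₁ ℝ) ⊗ₖ Em).charpoly =
      (A ⊗ₖ !![2,0;0,0] + (1 : Matrix V₁ V₁ ℝ) ⊗ₖ !![-1,0;0,1]).charpoly := by
    rw [← hconj, charpoly_conj _ _ _ hunit]
  rw [hcc]
  -- reindex to a block matrix
  have hre : (Matrix.reindex (pairEquiv V₁) (pairEquiv V₁)
        (Matrix.fromBlocks ((2:ℝ) • A - 1) 0 0 (1 : Matrix V₁ V₁ ℝ))) =
      A ⊗ₖ !![2,0;0,0] + (1 : Matrix V₁ V₁ ℝ) ⊗ₖ !![-1,0;0,1] := by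
    ext ⟨u, i⟩ ⟨v, j⟩
    fin_cases i <;> fin_cases j <;>
      by_cases huv : u = v <;>
        simp [pairEquiv, Matrix.fromBlocks, Matrix.one_apply, huv,
          Matrix.kroneckerMap_apply, Matrix.sub_apply, Matrix.smul_apply] <;> ring
  rw [← hre, Matrix.charpoly_reindex, Matrix.charpoly_fromBlocks_zero₁₂]
  -- charpoly of the identity block
  have hid : (1 : Matrix V₁ V₁ ℝ).charpoly = (X - 1) ^ m := by
    have : Matrix.charmatrix (1 : Matrix V₁ V₁ ℝ) =
        Matrix.diagonal fun _ : V₁ => (X - 1 : ℝ[X]) := by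
      ext i j
      by_cases h : i = j
      · subst h; simp
      · simp [Matrix.charmatrix_apply_ne _ _ _ h, Matrix.diagonal_apply_ne _ h,
          Matrix.one_apply_ne h]
    rw [Matrix.charpoly, this, Matrix.det_diagonal, Finset.prod_const, Finset.card_univ, hcard]
  -- charpoly of 2A - 1
  have h2A : ((2:ℝ) • A - 1).charpoly = ∏ i : Fin m, (X - C (2 * lam i - 1)) := by
    set q : ℝ[X] := C (2⁻¹ : ℝ) * (X + 1) with hq
    set ψ : ℝ[X] →+* ℝ[X] := eval₂RingHom (C : ℝ →+* ℝ[X]) q with hψ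
    have hC2 : (2 : ℝ[X]) = C 2 := (map_ofNat (C : ℝ →+* ℝ[X]) 2).symm
    have hhalf : (2 : ℝ[X]) * C (2⁻¹ : ℝ) = 1 := by
      rw [hC2, ← C_mul]; norm_num
    have hψC : ∀ a : ℝ, ψ (C a) = C a := fun a => by
      rw [hψ, coe_eval₂RingHom, eval₂_C]
    have hψX : ψ X = q := by rw [hψ, coe_eval₂RingHom, eval₂_X]
    have hfac : ∀ a : ℝ, 2 * (q - C a) = X - C (2 * a - 1) := by
      intro a
      rw [show (C (2 * a - 1) : ℝ[X]) = 2 * C a - 1 by rw [C_sub, C_mul, hC2, C_1], hq]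
      linear_combination ((X : ℝ[X]) + 1) * hhalf
    have hcm : Matrix.charmatrix ((2:ℝ) • A - 1) =
        (2 : ℝ[X]) • ((Matrix.charmatrix A).map ψ) := by
      ext i j
      by_cases h : i = j
      · subst h
        rw [Matrix.smul_apply, Matrix.map_apply, Matrix.charmatrix_apply_eq,
          Matrix.charmatrix_apply_eq, map_sub, hψC, hψX, smul_eq_mul, hfac,
          show ((2:ℝ) • A - 1) i i = 2 * A i i - 1 by
            simp [Matrix.sub_apply, Matrix.one_apply_eq]]
      · rw [Matrix.smul_apply, Matrix.map_apply, Matrix.charmatrix_apply_ne _ _ _ h,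
          Matrix.charmatrix_apply_ne _ _ _ h, map_neg, hψC, smul_eq_mul,
          show ((2:ℝ) • A - 1) i j = 2 * A i j by
            simp [Matrix.sub_apply, Matrix.one_apply_ne h],
          show (C (2 * A i j) : ℝ[X]) = 2 * C (A i j) by rw [C_mul, hC2]]
        ring
    rw [Matrix.charpoly, hcm, Matrix.det_smul]
    have hdetmap : ((Matrix.charmatrix A).map ψ).det = ψ A.charpoly := by
      rw [Matrix.charpoly, RingHom.map_det, RingHom.mapMatrix_apply]
    rw [hdetmap, hchar, map_prod]
    rw [hcard]
    rw [show (2 : ℝ[X]) ^ m = ∏ _i : Fin m, (2 : ℝ[X]) by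
      rw [Finset.prod_const, Finset.card_univ, Fintype.card_fin]]
    rw [← Finset.prod_mul_distrib]
    refine Finset.prod_congr rfl fun i _ => ?_
    rw [map_sub, hψX, hψC, hfac]
  rw [h2A, hid]
end
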